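/- Let (X_{i,j})_{i,j≥1} be an infinite array of i.i.d. nonnegative real random variables with mean E(X_{1,1}) = 1 and finite positive variance σ². Let ς_n := ∫ t² dν_{√n M}(t) = (1/n) Σ_{i=1}^n s_i(√n M)² = Σ_{i=1}^n (X_{i,1}² + ⋯ + X_{i,n}²)/(X_{i,1} + ⋯ + X_{i,n})² be the second moment of the empirical singular value distribution of √n M. Then almost surely limsup_{n→∞} ς_n ≤ 1 + σ². -/

import Mathlib

open MeasureTheory ProbabilityTheory Filter Matrix Polynomial Topology
open scoped ENNReal

noncomputable section

/-- Unsorted singular values of `A`: the square roots of the eigenvalues of `A * Aᴴ`. -/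
def singVals {n : ℕ} (A : Matrix (Fin n) (Fin n) ℂ) : Fin n → ℝ :=
  fun i => Real.sqrt ((Matrix.isHermitian_mul_conjTranspose_self A).eigenvalues i)

/-- The singular values of `A` sorted in nonincreasing order. -/
def sdesc {n : ℕ} (A : Matrix (Fin n) (Fin n) ℂ) : Fin n → ℝ :=
  fun i => (singVals A ∘ Tuple.sort (singVals A)) i.rev

/-- `sv A k` is the `(k+1)`-th largest singular value `s_{k+1}(A)` of `A`
(i.e. 0-based indexing: `sv A 0 = s₁(A)`, …, `sv A (n-1) = sₙ(A)`), junk value `0` out of range. -/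
def sv {n : ℕ} (A : Matrix (Fin n) (Fin n) ℂ) (k : ℕ) : ℝ :=
  if h : k < n then sdesc A ⟨k, h⟩ else 0

/-- Empirical singular value distribution `ν_A`. -/
def empSV {n : ℕ} (A : Matrix (Fin n) (Fin n) ℂ) : Measure ℝ :=
  (n : ℝ≥0∞)⁻¹ • ∑ i : Fin n, Measure.dirac (singVals A i)

/-- Empirical eigenvalue distribution `μ_A`: uniform measure on the roots (with multiplicity)
of the characteristic polynomial of `A`. -/
def empEig {n : ℕ} (A : Matrix (Fin n) (Fin n) ℂ) : Measure ℂ :=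
  (n : ℝ≥0∞)⁻¹ • ((A.charpoly.roots.map Measure.dirac).sum)

variable {Ω : Type} [MeasurableSpace Ω]

/-- The random `n×n` Markov matrix `M` built from the array `X`:
`M i j = X i j / (row sum)` when the row sum is positive, and `M i j = δ_{ij}` otherwise. -/
def markov (X : ℕ → ℕ → Ω → ℝ) (n : ℕ) (ω : Ω) : Matrix (Fin n) (Fin n) ℝ :=
  Matrix.of fun i j =>
    if 0 < ∑ k : Fin n, X i k ω then X i j ω / ∑ k : Fin n, X i k ω
    else if i = j then 1 else 0

/-- The Markov matrix `M`, viewed as a complex matrix. -/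
def markC (X : ℕ → ℕ → Ω → ℝ) (n : ℕ) (ω : Ω) : Matrix (Fin n) (Fin n) ℂ :=
  (markov X n ω).map (fun x => (x : ℂ))

/-- The matrix `√n M`, viewed as a complex matrix. -/
def sqnM (X : ℕ → ℕ → Ω → ℝ) (n : ℕ) (ω : Ω) : Matrix (Fin n) (Fin n) ℂ :=
  (Real.sqrt n : ℂ) • markC X n ω

/-- The matrix `n^{-1/2} X`, viewed as a complex matrix. -/
def sqnX (X : ℕ → ℕ → Ω → ℝ) (n : ℕ) (ω : Ω) : Matrix (Fin n) (Fin n) ℂ :=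
  ((Real.sqrt n : ℂ))⁻¹ • Matrix.of (fun i j : Fin n => (X i j ω : ℂ))

/-- Auxiliary: `exp (-u) ≤ 1 - u + u ^ 2` for `u ≥ 0`. -/
lemma aux_exp_neg_le {u : ℝ} (hu : 0 ≤ u) : Real.exp (-u) ≤ 1 - u + u ^ 2 := by
  have h1 : (0 : ℝ) < 1 + u := by linarith
  have h2 : 1 + u ≤ Real.exp u := by linarith [Real.add_one_le_exp u]
  have h3 : Real.exp (-u) * Real.exp u = 1 := by
    rw [← Real.exp_add]; simp
  nlinarith [Real.exp_pos (-u), Real.exp_pos u]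

/-- Auxiliary: restrict an independent family along an injective reindexing. -/
lemma iIndepFun_precomp {Ω' ι ι' : Type*} [Countable ι'] [MeasurableSpace Ω'] {μ : Measure Ω'}
    {f : ι → Ω' → ℝ} (h : iIndepFun f μ)
    {g : ι' → ι} (hg : Function.Injective g) :
    iIndepFun (fun j => f (g j)) μ := by
  classical
  rw [iIndepFun_iff_measure_inter_preimage_eq_mul] at h ⊢
  intro S sets hsets
  set sets' : ι → Set ℝ := fun i => ⋂ (j : ι') (_ : j ∈ S) (_ : g j = i), sets j with hsets'
  have hkey : ∀ j ∈ S, sets' (g j) = sets j := by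
    intro j hj
    apply Set.Subset.antisymm
    · intro x hx
      simp only [hsets', Set.mem_iInter] at hx
      exact hx j hj rfl
    · intro x hx
      simp only [hsets', Set.mem_iInter]
      intro j' hj' he
      cases hg he
      exact hx
  have hmeas' : ∀ i ∈ S.image g, MeasurableSet (sets' i) := by
    intro i _
    apply MeasurableSet.iInter; intro j
    apply MeasurableSet.iInter; intro hj
    exact MeasurableSet.iInter fun _ => hsets j hj
  have key := h (S.image g) hmeas'
  have hInter : (⋂ i ∈ S.image g, f i ⁻¹' sets' i) = ⋂ j ∈ S, f (g j) ⁻¹' sets j := by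
    ext x
    simp only [Set.mem_iInter, Finset.mem_image, Set.mem_preimage]
    constructor
    · intro hx j hj
      have := hx (g j) ⟨j, hj, rfl⟩
      rwa [hkey j hj] at this
    · rintro hx i ⟨j, hj, rfl⟩
      rw [hkey j hj]
      exact hx j hj
  have hProd : ∏ i ∈ S.image g, μ (f i ⁻¹' sets' i) = ∏ j ∈ S, μ (f (g j) ⁻¹' sets j) := by
    rw [Finset.prod_image (fun a _ b _ hab => hg hab)]
    exact Finset.prod_congr rfl fun j hj => by rw [hkey j hj]
  rw [hInter, hProd] at key
  exact key

/-- Auxiliary: `Nat.pair` maps `[0,n) × [0,n)` bijectively onto `[0, n^2)`. -/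
lemma pair_image_range (n : ℕ) :
    (Finset.range n ×ˢ Finset.range n).image (fun p : ℕ × ℕ => Nat.pair p.1 p.2) =
      Finset.range (n ^ 2) := by
  ext k
  simp only [Finset.mem_image, Finset.mem_product, Finset.mem_range, Prod.exists]
  constructor
  · rintro ⟨a, b, ⟨ha, hb⟩, rfl⟩
    calc Nat.pair a b < (max a b + 1) ^ 2 := Nat.pair_lt_max_add_one_sq a b
      _ ≤ n ^ 2 := Nat.pow_le_pow_left (by omega) 2
  · intro hk
    refine ⟨(Nat.unpair k).1, (Nat.unpair k).2, ⟨?_, ?_⟩, Nat.pair_unpair k⟩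
    · have h1 : (max (Nat.unpair k).1 (Nat.unpair k).2) ^ 2 ≤ k := by
        calc (max (Nat.unpair k).1 (Nat.unpair k).2) ^ 2
            ≤ (max (Nat.unpair k).1 (Nat.unpair k).2) ^ 2
              + min (Nat.unpair k).1 (Nat.unpair k).2 := Nat.le_add_right _ _
          _ ≤ Nat.pair (Nat.unpair k).1 (Nat.unpair k).2 := Nat.max_sq_add_min_le_pair _ _
          _ = k := Nat.pair_unpair k
      have h2 : max (Nat.unpair k).1 (Nat.unpair k).2 < n := by
        by_contra hc
        push_neg at hc
        exact absurd (lt_of_le_of_lt h1 hk) (not_lt.mpr (Nat.pow_le_pow_left hc 2))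
      omega
    · have h1 : (max (Nat.unpair k).1 (Nat.unpair k).2) ^ 2 ≤ k := by
        calc (max (Nat.unpair k).1 (Nat.unpair k).2) ^ 2
            ≤ (max (Nat.unpair k).1 (Nat.unpair k).2) ^ 2
              + min (Nat.unpair k).1 (Nat.unpair k).2 := Nat.le_add_right _ _
          _ ≤ Nat.pair (Nat.unpair k).1 (Nat.unpair k).2 := Nat.max_sq_add_min_le_pair _ _
          _ = k := Nat.pair_unpair k
      have h2 : max (Nat.unpair k).1 (Nat.unpair k).2 < n := by
        by_contra hc
        push_neg at hc
        exact absurd (lt_of_le_of_lt h1 hk) (not_lt.mpr (Nat.pow_le_pow_left hc 2))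
      omega

/-- The second moment `ς_n` of the empirical singular value distribution of `√n M` satisfies
a.s. `limsup ς_n ≤ 1 + σ²`. -/
theorem second_moment_bound
    (μ : Measure Ω) [IsProbabilityMeasure μ]
    (X : ℕ → ℕ → Ω → ℝ) (σ : ℝ) (hσ : 0 < σ)
    (h_nonneg : ∀ i j ω, 0 ≤ X i j ω)
    (h_meas : ∀ i j, Measurable (X i j))
    (h_indep : iIndepFun (fun p : ℕ × ℕ => X p.1 p.2) μ)
    (h_ident : ∀ i j, IdentDistrib (X i j) (X 0 0) μ μ)
    (h_L2 : MemLp (X 0 0) 2 μ)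
    (h_mean : ∫ ω, X 0 0 ω ∂μ = 1)
    (h_var : variance (X 0 0) μ = σ ^ 2) :
    ∀ᵐ ω ∂μ,
      limsup (fun n : ℕ => ∑ i : Fin n,
        (∑ j : Fin n, (X i j ω) ^ 2) / (∑ j : Fin n, X i j ω) ^ 2) atTop ≤ 1 + σ ^ 2 := by
  classical
  have hσ2 : (0:ℝ) ≤ σ ^ 2 := sq_nonneg σ
  set C : ℝ := 1 + σ ^ 2 with hCdef
  have hC1 : (1:ℝ) ≤ C := by simp [hCdef]; positivity
  have hC0 : (0:ℝ) < C := lt_of_lt_of_le one_pos hC1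
  -- basic integrability facts
  have hXint : Integrable (X 0 0) μ := h_L2.integrable one_le_two
  have hX2int : Integrable (fun ω => X 0 0 ω ^ 2) μ := h_L2.integrable_sq
  -- second moment
  have hX2 : ∫ ω, X 0 0 ω ^ 2 ∂μ = C := by
    have h := variance_eq_sub h_L2
    rw [h_var] at h
    have h2 : μ[(X 0 0) ^ 2] = ∫ ω, X 0 0 ω ^ 2 ∂μ := by
      apply integral_congr_ae
      filter_upwards with ω
      simp
    rw [h2, h_mean] at h
    simp [hCdef]
    linarith
  -- Part A : strong law for the array of squares along square blocks
  set Y : ℕ → Ω → ℝ := fun k ω => X (Nat.unpair k).1 (Nat.unpair k).2 ω ^ 2 with hYdef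
  have hY0 : Y 0 = fun ω => X 0 0 ω ^ 2 := by
    funext ω; simp [hYdef, Nat.unpair_zero]
  have hYint : Integrable (Y 0) μ := by rw [hY0]; exact hX2int
  have hsq_meas : Measurable (fun x : ℝ => x ^ 2) := measurable_id.pow_const 2
  have hYindep : Pairwise (Function.onFun (IndepFun · · μ) Y) := by
    intro k l hkl
    have hne : (Nat.unpair k) ≠ (Nat.unpair l) := by
      intro h
      exact hkl (by rw [← Nat.pair_unpair k, ← Nat.pair_unpair l, h])
    exact (h_indep.indepFun hne).comp hsq_meas hsq_meas
  have hYident : ∀ k, IdentDistrib (Y k) (Y 0) μ μ := by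
    intro k
    rw [hY0]
    exact (h_ident (Nat.unpair k).1 (Nat.unpair k).2).comp hsq_meas
  have hEY : μ[Y 0] = C := by rw [hY0]; exact hX2
  have hSLLN := strong_law_ae_real Y hYint hYindep hYident
  rw [hEY] at hSLLN
  have hsum_eq : ∀ (n : ℕ) (ω : Ω), ∑ k ∈ Finset.range (n ^ 2), Y k ω
      = ∑ i ∈ Finset.range n, ∑ j ∈ Finset.range n, X i j ω ^ 2 := by
    intro n ω
    rw [← pair_image_range n, Finset.sum_image]
    · rw [Finset.sum_product]
      exact Finset.sum_congr rfl fun p _ => by simp [hYdef, Nat.unpair_pair]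
    · intro p _ q _ h
      have := congrArg Nat.unpair h
      rwa [Nat.unpair_pair, Nat.unpair_pair, Prod.mk.injEq, ← Prod.ext_iff] at this
  have hA : ∀ᵐ ω ∂μ, Tendsto
      (fun n : ℕ => (∑ i ∈ Finset.range n, ∑ j ∈ Finset.range n, X i j ω ^ 2) / (n : ℝ) ^ 2)
      atTop (𝓝 C) := by
    filter_upwards [hSLLN] with ω hω
    have hcomp : Tendsto (fun n : ℕ => n ^ 2) atTop atTop :=
      tendsto_atTop_mono (fun n => Nat.le_self_pow two_ne_zero n) tendsto_id
    have := hω.comp hcomp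
    have heq : (fun n : ℕ => (∑ k ∈ Finset.range (n ^ 2), Y k ω) / ((n ^ 2 : ℕ) : ℝ))
        = fun n : ℕ => (∑ i ∈ Finset.range n, ∑ j ∈ Finset.range n, X i j ω ^ 2) / (n : ℝ) ^ 2 := by
      funext n
      rw [hsum_eq n ω]
      push_cast
      ring_nf
    rw [← heq]
    exact this
  -- Part B : uniform lower bound for the row sums
  have hB : ∀ ε : ℝ, 0 < ε → ε < 1 →
      ∀ᵐ ω ∂μ, ∀ᶠ n : ℕ in atTop, ∀ i, i < n →
        (1 - ε) * n ≤ ∑ j ∈ Finset.range n, X i j ω := by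
    intro ε hε0 hε1
    set t : ℝ := ε / (2 * C) with htdef
    have ht0 : 0 < t := by positivity
    have htC : t * C = ε / 2 := by
      rw [htdef, div_mul_eq_mul_div, div_eq_iff (by positivity)]
      ring
    have ht_half : t ≤ 1 / 2 := by
      rw [htdef, div_le_div_iff₀ (by positivity) (by norm_num)]
      nlinarith
    set b : ℝ := 1 - t + t ^ 2 * C with hbdef
    have htsq : t ^ 2 * C = t * (ε / 2) := by rw [pow_two, mul_assoc, htC]
    have hb0 : (0:ℝ) < b := by
      have : 0 ≤ t ^ 2 * C := by positivity
      simp only [hbdef]; linarith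
    set r : ℝ := Real.exp (t * (1 - ε)) * b with hrdef
    have hr0 : (0:ℝ) ≤ r := by positivity
    have hrlt : r < 1 := by
      have h1 : b ≤ Real.exp (-t + t ^ 2 * C) := by
        have := Real.add_one_le_exp (-t + t ^ 2 * C)
        simp only [hbdef]; linarith
      calc r ≤ Real.exp (t * (1 - ε)) * Real.exp (-t + t ^ 2 * C) := by
              rw [hrdef]
              exact mul_le_mul_of_nonneg_left h1 (Real.exp_pos _).le
        _ = Real.exp (t * (1 - ε) + (-t + t ^ 2 * C)) := (Real.exp_add _ _).symm
        _ < 1 := by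
              rw [Real.exp_lt_one_iff]
              rw [htsq]
              nlinarith
    -- bound on the mgf of a single entry
    have hmgf_le : mgf (X 0 0) μ (-t) ≤ b := by
      have hpt : ∀ ω, Real.exp (-t * X 0 0 ω) ≤ 1 - t * X 0 0 ω + t ^ 2 * X 0 0 ω ^ 2 := by
        intro ω
        have h := aux_exp_neg_le (mul_nonneg ht0.le (h_nonneg 0 0 ω))
        rw [mul_pow] at h
        rwa [neg_mul]
      have hint1 : Integrable (fun ω => Real.exp (-t * X 0 0 ω)) μ := by
        refine Integrable.mono' (integrable_const 1)
          (((h_meas 0 0).const_mul (-t)).exp.aestronglyMeasurable) ?_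
        filter_upwards with ω
        rw [Real.norm_eq_abs, abs_of_nonneg (Real.exp_pos _).le, ← Real.exp_zero]
        apply Real.exp_le_exp.mpr
        have := h_nonneg 0 0 ω
        nlinarith
      have hint2 : Integrable (fun ω => 1 - t * X 0 0 ω + t ^ 2 * X 0 0 ω ^ 2) μ :=
        ((integrable_const 1).sub (hXint.const_mul t)).add (hX2int.const_mul (t ^ 2))
      have hint12 : Integrable (fun ω => 1 - t * X 0 0 ω) μ :=
        (integrable_const 1).sub (hXint.const_mul t)
      have hint3 : Integrable (fun ω => t ^ 2 * X 0 0 ω ^ 2) μ := hX2int.const_mul (t ^ 2)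
      have hintc : Integrable (fun _ : Ω => (1:ℝ)) μ := integrable_const 1
      have hinttX : Integrable (fun ω => t * X 0 0 ω) μ := hXint.const_mul t
      have hcalc : ∫ ω, (1 - t * X 0 0 ω + t ^ 2 * X 0 0 ω ^ 2) ∂μ = b := by
        rw [integral_add hint12 hint3, integral_sub hintc hinttX,
          integral_const, integral_const_mul, integral_const_mul, h_mean, hX2]
        simp [hbdef]
      calc mgf (X 0 0) μ (-t) = ∫ ω, Real.exp (-t * X 0 0 ω) ∂μ := rfl
        _ ≤ ∫ ω, (1 - t * X 0 0 ω + t ^ 2 * X 0 0 ω ^ 2) ∂μ :=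
            integral_mono hint1 hint2 hpt
        _ = b := hcalc
    -- Chernoff bound for one row sum
    have hrow : ∀ n : ℕ, ∀ i : ℕ,
        μ {ω | (∑ j ∈ Finset.range n, X i j ω) ≤ (1 - ε) * n} ≤ ENNReal.ofReal (r ^ n) := by
      intro n i
      have hind_row : iIndepFun (fun j => X i j) μ :=
        iIndepFun_precomp h_indep (g := fun j => (i, j))
          (fun a b h => by simpa using congrArg Prod.snd h)
      set Sf : Ω → ℝ := ∑ j ∈ Finset.range n, X i j with hSfdef
      have hSf : ∀ ω, Sf ω = ∑ j ∈ Finset.range n, X i j ω := by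
        intro ω; simp [hSfdef]
      have hSf_nonneg : ∀ ω, 0 ≤ Sf ω := by
        intro ω; rw [hSf]; exact Finset.sum_nonneg fun j _ => h_nonneg i j ω
      have hSfmeas : Measurable Sf := by
        rw [show Sf = fun ω => ∑ j ∈ Finset.range n, X i j ω from funext hSf]
        exact Finset.measurable_sum _ fun j _ => h_meas i j
      have hS_int : Integrable (fun ω => Real.exp (-t * Sf ω)) μ := by
        refine Integrable.mono' (integrable_const 1)
          ((hSfmeas.const_mul (-t)).exp.aestronglyMeasurable) ?_
        filter_upwards with ω
        rw [Real.norm_eq_abs, abs_of_nonneg (Real.exp_pos _).le, ← Real.exp_zero]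
        apply Real.exp_le_exp.mpr
        have := hSf_nonneg ω
        nlinarith
      have hcher := measure_le_le_exp_mul_mgf (μ := μ) (X := Sf) ((1 - ε) * n)
        (neg_nonpos.mpr ht0.le) hS_int
      have hmgfS : mgf Sf μ (-t) = mgf (X 0 0) μ (-t) ^ n := by
        rw [hSfdef, hind_row.mgf_sum (fun j => h_meas i j)]
        have : ∀ j ∈ Finset.range n, mgf (X i j) μ (-t) = mgf (X 0 0) μ (-t) := by
          intro j _
          have h1 : IdentDistrib (fun ω => Real.exp (-t * X i j ω))
              (fun ω => Real.exp (-t * X 0 0 ω)) μ μ :=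
            (h_ident i j).comp (Real.measurable_exp.comp (measurable_const_mul (-t)))
          exact h1.integral_eq
        rw [Finset.prod_congr rfl this, Finset.prod_const, Finset.card_range]
      have hreal : Real.exp (-(-t) * ((1 - ε) * n)) * mgf Sf μ (-t) ≤ r ^ n := by
        rw [hmgfS]
        have h1 : Real.exp (-(-t) * ((1 - ε) * n)) = Real.exp (t * (1 - ε)) ^ n := by
          rw [← Real.exp_nat_mul]
          congr 1
          ring
        rw [h1, hrdef, mul_pow]
        exact mul_le_mul_of_nonneg_left (pow_le_pow_left₀ (mgf_nonneg) hmgf_le n)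
          (pow_nonneg (Real.exp_pos _).le n)
      have hset : {ω | (∑ j ∈ Finset.range n, X i j ω) ≤ (1 - ε) * n}
          = {ω | Sf ω ≤ (1 - ε) * n} := by
        ext ω; simp [hSf]
      rw [hset, ENNReal.le_ofReal_iff_toReal_le (measure_ne_top μ _) (by positivity)]
      exact hcher.trans hreal
    -- Borel–Cantelli
    set bad : ℕ → Set Ω := fun n =>
      ⋃ i ∈ Finset.range n, {ω | (∑ j ∈ Finset.range n, X i j ω) ≤ (1 - ε) * n} with hbaddef
    have hbad : ∀ n, μ (bad n) ≤ ENNReal.ofReal ((n : ℝ) * r ^ n) := by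
      intro n
      calc μ (bad n) ≤ ∑ i ∈ Finset.range n,
            μ {ω | (∑ j ∈ Finset.range n, X i j ω) ≤ (1 - ε) * n} :=
          measure_biUnion_finset_le _ _
        _ ≤ ∑ _i ∈ Finset.range n, ENNReal.ofReal (r ^ n) :=
          Finset.sum_le_sum fun i _ => hrow n i
        _ = (n : ℝ≥0∞) * ENNReal.ofReal (r ^ n) := by
          rw [Finset.sum_const, Finset.card_range, nsmul_eq_mul]
        _ = ENNReal.ofReal ((n : ℝ) * r ^ n) := by
          rw [ENNReal.ofReal_mul (by positivity), ENNReal.ofReal_natCast]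
    have hsummable : Summable (fun n : ℕ => (n : ℝ) * r ^ n) := by
      have := summable_pow_mul_geometric_of_norm_lt_one 1
        (r := r) (by rwa [Real.norm_eq_abs, abs_of_nonneg hr0])
      simpa using this
    have htop : (∑' n, μ (bad n)) ≠ ⊤ := by
      apply ne_of_lt
      calc (∑' n, μ (bad n)) ≤ ∑' n : ℕ, ENNReal.ofReal ((n : ℝ) * r ^ n) :=
          ENNReal.tsum_le_tsum hbad
        _ = ENNReal.ofReal (∑' n : ℕ, (n : ℝ) * r ^ n) :=
          (ENNReal.ofReal_tsum_of_nonneg (fun n => by positivity) hsummable).symm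
        _ < ⊤ := ENNReal.ofReal_lt_top
    filter_upwards [ae_eventually_notMem htop] with ω hω
    filter_upwards [hω] with n hn i hi
    by_contra hc
    push_neg at hc
    exact hn (Set.mem_biUnion (Finset.mem_range.mpr hi) (le_of_lt hc))
  -- Combine
  have hε : ∀ k : ℕ, 0 < (1:ℝ) / (k + 2) ∧ (1:ℝ) / (k + 2) < 1 := by
    intro k
    constructor
    · positivity
    · rw [div_lt_one (by positivity)]
      have : (0:ℝ) ≤ (k:ℝ) := Nat.cast_nonneg k
      linarith
  have hall : ∀ᵐ ω ∂μ, (Tendsto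
      (fun n : ℕ => (∑ i ∈ Finset.range n, ∑ j ∈ Finset.range n, X i j ω ^ 2) / (n : ℝ) ^ 2)
      atTop (𝓝 C)) ∧ ∀ k : ℕ, ∀ᶠ n : ℕ in atTop, ∀ i, i < n →
        (1 - 1/((k:ℝ)+2)) * n ≤ ∑ j ∈ Finset.range n, X i j ω :=
    hA.and (ae_all_iff.mpr fun k => hB (1/((k:ℝ)+2)) (hε k).1 (hε k).2)
  filter_upwards [hall] with ω hω
  obtain ⟨hA', hB'⟩ := hω
  set u : ℕ → ℝ := fun n => ∑ i : Fin n,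
    (∑ j : Fin n, (X i j ω) ^ 2) / (∑ j : Fin n, X i j ω) ^ 2 with hudef
  have hu0 : ∀ n, 0 ≤ u n := by
    intro n
    apply Finset.sum_nonneg
    intro i _
    apply div_nonneg
    · exact Finset.sum_nonneg fun j _ => sq_nonneg _
    · exact sq_nonneg _
  have hucob : IsCoboundedUnder (· ≤ ·) atTop u :=
    isCoboundedUnder_le_of_le atTop hu0
  have hbnd : ∀ k : ℕ, limsup u atTop ≤ (C + 1/((k:ℝ)+2)) / (1 - 1/((k:ℝ)+2)) ^ 2 := by
    intro k
    set ε : ℝ := 1/((k:ℝ)+2) with hεdef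
    have hε0 : 0 < ε := (hε k).1
    have hε1 : ε < 1 := (hε k).2
    apply limsup_le_of_le hucob
    have hev1 : ∀ᶠ n : ℕ in atTop,
        (∑ i ∈ Finset.range n, ∑ j ∈ Finset.range n, X i j ω ^ 2) / (n : ℝ) ^ 2 ≤ C + ε :=
      hA'.eventually_le_const (by linarith)
    filter_upwards [hev1, hB' k, eventually_ge_atTop 1] with n h1 h2 hn1
    have hn0 : (0:ℝ) < (n:ℝ) := by exact_mod_cast hn1
    have hden : (0:ℝ) < (1 - ε) * n := mul_pos (by linarith) hn0
    have hu_eq : u n = ∑ i ∈ Finset.range n,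
        (∑ j ∈ Finset.range n, X i j ω ^ 2) / (∑ j ∈ Finset.range n, X i j ω) ^ 2 := by
      rw [hudef]
      rw [← Fin.sum_univ_eq_sum_range (fun i =>
        (∑ j ∈ Finset.range n, X i j ω ^ 2) / (∑ j ∈ Finset.range n, X i j ω) ^ 2) n]
      apply Finset.sum_congr rfl
      intro i _
      rw [Fin.sum_univ_eq_sum_range (fun j => X i j ω ^ 2) n,
        Fin.sum_univ_eq_sum_range (fun j => X i j ω) n]
    calc u n ≤ ∑ i ∈ Finset.range n,
          (∑ j ∈ Finset.range n, X i j ω ^ 2) / ((1 - ε) * n) ^ 2 := by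
          rw [hu_eq]
          apply Finset.sum_le_sum
          intro i hi
          apply div_le_div_of_nonneg_left
            (Finset.sum_nonneg fun j _ => sq_nonneg _) (by positivity)
          exact pow_le_pow_left₀ hden.le (h2 i (Finset.mem_range.mp hi)) 2
      _ = (∑ i ∈ Finset.range n, ∑ j ∈ Finset.range n, X i j ω ^ 2) / ((1 - ε) * n) ^ 2 :=
          (Finset.sum_div _ _ _).symm
      _ ≤ ((C + ε) * (n:ℝ) ^ 2) / ((1 - ε) * n) ^ 2 := by
          apply div_le_div_of_nonneg_right ?_ (by positivity)
          · exact (div_le_iff₀ (by positivity)).mp h1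
      _ = (C + ε) / (1 - ε) ^ 2 := by
          have hn2 : ((n:ℝ)) ^ 2 ≠ 0 := by positivity
          rw [mul_pow, mul_comm ((1 - ε) ^ 2) (((n:ℝ)) ^ 2), ← div_div, mul_div_assoc,
            div_self hn2, mul_one]
  have htend : Tendsto (fun k : ℕ => (C + 1/((k:ℝ)+2)) / (1 - 1/((k:ℝ)+2)) ^ 2)
      atTop (𝓝 C) := by
    have h2 : Tendsto (fun k : ℕ => 1/((k:ℝ)+2)) atTop (𝓝 0) := by
      have ha : Tendsto (fun k : ℕ => ((k:ℝ)+2)) atTop atTop :=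
        tendsto_atTop_add_const_right atTop 2 tendsto_natCast_atTop_atTop
      simpa [one_div, Pi.inv_def] using ha.inv_tendsto_atTop
    have hden : ((1:ℝ) - 0) ^ 2 ≠ 0 := by norm_num
    have hnum : Tendsto (fun k : ℕ => C + 1/((k:ℝ)+2)) atTop (𝓝 (C + 0)) :=
      tendsto_const_nhds.add h2
    have hden' : Tendsto (fun k : ℕ => (1 - 1/((k:ℝ)+2)) ^ 2) atTop (𝓝 (((1:ℝ) - 0) ^ 2)) :=
      (tendsto_const_nhds.sub h2).pow 2
    have := hnum.div hden' hden
    simpa [Pi.div_def] using this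
  exact ge_of_tendsto' htend hbnd
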